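/- Under the dn-type background (l = K'/2), the four cut endpoints of the conformal map λ(z) = (iαk²/2)·sn(i(z-l))cn(i(z-l))/dn(i(z-l)) at z = ±K'/2 ± iK/2 are λ̂₁ = -(iα/2)(1 - k'), λ̂₂ = (iα/2)(1 - k'), λ̂₃ = -(iα/2)(1 + k'), λ̂₄ = (iα/2)(1 + k'); as k → 0⁺ they converge to 0, 0, -iα, iα respectively. -/
import Mathlib


/-- under the dn-type background (`l = K'/2`), the four cut endpoints of
the conformal map `λ(z) = (iαk²/2)sn(i(z-l))cn(i(z-l))/dn(i(z-l))` at
`z = ±K'/2 ± iK/2` are `λ̂₁ = -(iα/2)(1-k')`, `λ̂₂ = (iα/2)(1-k')`,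
`λ̂₃ = -(iα/2)(1+k')`, `λ̂₄ = (iα/2)(1+k')`; as `k → 0⁺` (with `k' = √(1-k²)`) they
converge to `0, 0, -iα, iα` respectively.  The complex Jacobi functions of modulus
`k` are characterized by the standard values at `0` and `K`, parity, periodicity
and the half-argument identity `k²sn(u)cn(u)/dn(u) = (1-dn(2u))/sn(2u)`. -/
theorem dn_cut_endpoints (α k k' K K' : ℝ)
    (hα : α ≠ 0) (hk : k ∈ Set.Ioo (0:ℝ) 1) (hk' : k' = Real.sqrt (1 - k ^ 2))
    (hK : 0 < K) (hK' : 0 < K')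
    (sn cn dn : ℂ → ℂ)
    (h0s : sn 0 = 0) (h0c : cn 0 = 1) (h0d : dn 0 = 1)
    (hKs : sn (K : ℂ) = 1) (hKc : cn (K : ℂ) = 0) (hKd : dn (K : ℂ) = (k' : ℂ))
    (ho : ∀ u : ℂ, sn (-u) = -sn u)
    (he1 : ∀ u : ℂ, cn (-u) = cn u)
    (he2 : ∀ u : ℂ, dn (-u) = dn u)
    (hperK1 : ∀ u : ℂ, sn (u + 2 * K) = -sn u)
    (hperK2 : ∀ u : ℂ, cn (u + 2 * K) = -cn u)
    (hperK3 : ∀ u : ℂ, dn (u + 2 * K) = dn u)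
    (hperK'1 : ∀ u : ℂ, sn (u + 2 * Complex.I * K') = sn u)
    (hperK'2 : ∀ u : ℂ, cn (u + 2 * Complex.I * K') = -cn u)
    (hperK'3 : ∀ u : ℂ, dn (u + 2 * Complex.I * K') = -dn u)
    (hhalf : ∀ u : ℂ, (k : ℂ) ^ 2 * sn u * cn u / dn u = (1 - dn (2 * u)) / sn (2 * u)) :
    let lam : ℂ → ℂ := fun z =>
      (Complex.I * (α : ℂ) * (k : ℂ) ^ 2 / 2)
        * sn (Complex.I * (z - (K' : ℂ) / 2)) * cn (Complex.I * (z - (K' : ℂ) / 2))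
        / dn (Complex.I * (z - (K' : ℂ) / 2))
    (lam ((K' : ℂ) / 2 + Complex.I * K / 2)
        = -((Complex.I * (α : ℂ) / 2) * (1 - (k' : ℂ))))
    ∧ (lam ((K' : ℂ) / 2 - Complex.I * K / 2)
        = (Complex.I * (α : ℂ) / 2) * (1 - (k' : ℂ)))
    ∧ (lam (-(K' : ℂ) / 2 + Complex.I * K / 2)
        = -((Complex.I * (α : ℂ) / 2) * (1 + (k' : ℂ))))
    ∧ (lam (-(K' : ℂ) / 2 - Complex.I * K / 2)
        = (Complex.I * (α : ℂ) / 2) * (1 + (k' : ℂ)))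
    ∧ Filter.Tendsto (fun m : ℝ => -((Complex.I * (α : ℂ) / 2) *
          (1 - ((Real.sqrt (1 - m ^ 2) : ℝ) : ℂ))))
        (nhdsWithin 0 (Set.Ioi 0)) (nhds (0 : ℂ))
    ∧ Filter.Tendsto (fun m : ℝ => (Complex.I * (α : ℂ) / 2) *
          (1 - ((Real.sqrt (1 - m ^ 2) : ℝ) : ℂ)))
        (nhdsWithin 0 (Set.Ioi 0)) (nhds (0 : ℂ))
    ∧ Filter.Tendsto (fun m : ℝ => -((Complex.I * (α : ℂ) / 2) *
          (1 + ((Real.sqrt (1 - m ^ 2) : ℝ) : ℂ))))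
        (nhdsWithin 0 (Set.Ioi 0)) (nhds (-(Complex.I * (α : ℂ))))
    ∧ Filter.Tendsto (fun m : ℝ => (Complex.I * (α : ℂ) / 2) *
          (1 + ((Real.sqrt (1 - m ^ 2) : ℝ) : ℂ)))
        (nhdsWithin 0 (Set.Ioi 0)) (nhds (Complex.I * (α : ℂ))) := by
  intro lam
  have key : ∀ u : ℂ, Complex.I * (α : ℂ) * (k : ℂ) ^ 2 / 2 * sn u * cn u / dn u
      = (Complex.I * (α : ℂ) / 2) * ((1 - dn (2 * u)) / sn (2 * u)) := by
    intro u
    rw [← hhalf u]; ring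
  have a1 : Complex.I * ((K' : ℂ) / 2 + Complex.I * K / 2 - (K' : ℂ) / 2) = -((K:ℂ)/2) := by
    linear_combination ((K:ℂ)/2) * Complex.I_mul_I
  have a2 : Complex.I * ((K' : ℂ) / 2 - Complex.I * K / 2 - (K' : ℂ) / 2) = (K:ℂ)/2 := by
    linear_combination (-(K:ℂ)/2) * Complex.I_mul_I
  have a3 : Complex.I * (-(K' : ℂ) / 2 + Complex.I * K / 2 - (K' : ℂ) / 2)
      = -((K:ℂ)/2) - Complex.I * (K':ℂ) := by
    linear_combination ((K:ℂ)/2) * Complex.I_mul_I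
  have a4 : Complex.I * (-(K' : ℂ) / 2 - Complex.I * K / 2 - (K' : ℂ) / 2)
      = (K:ℂ)/2 - Complex.I * (K':ℂ) := by
    linear_combination (-(K:ℂ)/2) * Complex.I_mul_I
  have snK : sn (-(K:ℂ)) = -1 := by rw [ho, hKs]
  have dnK : dn (-(K:ℂ)) = (k':ℂ) := by rw [he2, hKd]
  have sn3 : sn (-(K:ℂ) - 2 * Complex.I * (K':ℂ)) = -1 := by
    have h := hperK'1 (-(K:ℂ) - 2 * Complex.I * (K':ℂ))
    have e : -(K:ℂ) - 2 * Complex.I * (K':ℂ) + 2 * Complex.I * (K':ℂ) = -(K:ℂ) := by ring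
    rw [e, snK] at h; exact h.symm
  have dn3 : dn (-(K:ℂ) - 2 * Complex.I * (K':ℂ)) = -(k':ℂ) := by
    have h := hperK'3 (-(K:ℂ) - 2 * Complex.I * (K':ℂ))
    have e : -(K:ℂ) - 2 * Complex.I * (K':ℂ) + 2 * Complex.I * (K':ℂ) = -(K:ℂ) := by ring
    rw [e, dnK] at h; linear_combination h
  have sn4 : sn ((K:ℂ) - 2 * Complex.I * (K':ℂ)) = 1 := by
    have h := hperK'1 ((K:ℂ) - 2 * Complex.I * (K':ℂ))
    have e : (K:ℂ) - 2 * Complex.I * (K':ℂ) + 2 * Complex.I * (K':ℂ) = (K:ℂ) := by ring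
    rw [e, hKs] at h; exact h.symm
  have dn4 : dn ((K:ℂ) - 2 * Complex.I * (K':ℂ)) = -(k':ℂ) := by
    have h := hperK'3 ((K:ℂ) - 2 * Complex.I * (K':ℂ))
    have e : (K:ℂ) - 2 * Complex.I * (K':ℂ) + 2 * Complex.I * (K':ℂ) = (K:ℂ) := by ring
    rw [e, hKd] at h; linear_combination h
  have hsq : Filter.Tendsto (fun m : ℝ => ((Real.sqrt (1 - m ^ 2) : ℝ) : ℂ))
      (nhdsWithin 0 (Set.Ioi 0)) (nhds 1) := by
    have hc : Continuous fun m : ℝ => ((Real.sqrt (1 - m ^ 2) : ℝ) : ℂ) := by continuity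
    have h2 : Filter.Tendsto (fun m : ℝ => ((Real.sqrt (1 - m ^ 2) : ℝ) : ℂ))
        (nhdsWithin 0 (Set.Ioi 0)) (nhds ((Real.sqrt (1 - (0:ℝ) ^ 2) : ℝ) : ℂ)) :=
      (hc.tendsto 0).mono_left nhdsWithin_le_nhds
    simpa using h2
  refine ⟨?_, ?_, ?_, ?_, ?_, ?_, ?_, ?_⟩
  · show Complex.I * (α : ℂ) * (k : ℂ) ^ 2 / 2
        * sn (Complex.I * ((K' : ℂ) / 2 + Complex.I * K / 2 - (K' : ℂ) / 2))
        * cn (Complex.I * ((K' : ℂ) / 2 + Complex.I * K / 2 - (K' : ℂ) / 2))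
        / dn (Complex.I * ((K' : ℂ) / 2 + Complex.I * K / 2 - (K' : ℂ) / 2)) = _
    rw [a1, key]
    have e : (2:ℂ) * (-((K:ℂ)/2)) = -(K:ℂ) := by ring
    rw [e, snK, dnK]; ring
  · show Complex.I * (α : ℂ) * (k : ℂ) ^ 2 / 2
        * sn (Complex.I * ((K' : ℂ) / 2 - Complex.I * K / 2 - (K' : ℂ) / 2))
        * cn (Complex.I * ((K' : ℂ) / 2 - Complex.I * K / 2 - (K' : ℂ) / 2))
        / dn (Complex.I * ((K' : ℂ) / 2 - Complex.I * K / 2 - (K' : ℂ) / 2)) = _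
    rw [a2, key]
    have e : (2:ℂ) * ((K:ℂ)/2) = (K:ℂ) := by ring
    rw [e, hKs, hKd]; ring
  · show Complex.I * (α : ℂ) * (k : ℂ) ^ 2 / 2
        * sn (Complex.I * (-(K' : ℂ) / 2 + Complex.I * K / 2 - (K' : ℂ) / 2))
        * cn (Complex.I * (-(K' : ℂ) / 2 + Complex.I * K / 2 - (K' : ℂ) / 2))
        / dn (Complex.I * (-(K' : ℂ) / 2 + Complex.I * K / 2 - (K' : ℂ) / 2)) = _
    rw [a3, key]
    have e : (2:ℂ) * (-((K:ℂ)/2) - Complex.I * (K':ℂ)) = -(K:ℂ) - 2 * Complex.I * (K':ℂ) := by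
      ring
    rw [e, sn3, dn3]; ring
  · show Complex.I * (α : ℂ) * (k : ℂ) ^ 2 / 2
        * sn (Complex.I * (-(K' : ℂ) / 2 - Complex.I * K / 2 - (K' : ℂ) / 2))
        * cn (Complex.I * (-(K' : ℂ) / 2 - Complex.I * K / 2 - (K' : ℂ) / 2))
        / dn (Complex.I * (-(K' : ℂ) / 2 - Complex.I * K / 2 - (K' : ℂ) / 2)) = _
    rw [a4, key]
    have e : (2:ℂ) * ((K:ℂ)/2 - Complex.I * (K':ℂ)) = (K:ℂ) - 2 * Complex.I * (K':ℂ) := by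
      ring
    rw [e, sn4, dn4]; ring
  · have t := (((tendsto_const_nhds : Filter.Tendsto (fun _ : ℝ => (1:ℂ)) (nhdsWithin 0 (Set.Ioi 0)) (nhds 1)).sub hsq).const_mul (Complex.I * (α:ℂ) / 2)).neg
    simpa using t
  · have t := ((tendsto_const_nhds : Filter.Tendsto (fun _ : ℝ => (1:ℂ)) (nhdsWithin 0 (Set.Ioi 0)) (nhds 1)).sub hsq).const_mul (Complex.I * (α:ℂ) / 2)
    simpa using t
  · have t := (((tendsto_const_nhds : Filter.Tendsto (fun _ : ℝ => (1:ℂ)) (nhdsWithin 0 (Set.Ioi 0)) (nhds 1)).add hsq).const_mul (Complex.I * (α:ℂ) / 2)).neg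
    convert t using 2
    ring
  · have t := ((tendsto_const_nhds : Filter.Tendsto (fun _ : ℝ => (1:ℂ)) (nhdsWithin 0 (Set.Ioi 0)) (nhds 1)).add hsq).const_mul (Complex.I * (α:ℂ) / 2)
    convert t using 2
    ring
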